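/- arXiv:1804.00944 — 4 statements merged into one kernel-verified Lean document; each statement's English description precedes it below -/
import Mathlib

section
/- Let 0 → E' → E → E'' → 0 be an exact sequence of X-filtered R-modules in which the maps f : E' → E and g : E → E'' are bicontrolled. If E is lean, then E'' is lean. -/
open Metric Set

/-- The closed metric `r`-enlargement of a subset `S` of a metric space. -/
def enl {X : Type*} [PseudoMetricSpace X] (S : Set X) (r : ℝ) : Set X :=
  {x | ∃ s ∈ S, dist x s ≤ r}

section Defs

variable {X : Type*} [PseudoMetricSpace X] (R : Type*) [Ring R]

/-- An `X`-filtered `R`-module structure on `M`: a monotone assignment of submodules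
with `F ∅ = ⊥` and `F X` being the whole module. -/
def IsXFiltration {M : Type*} [AddCommGroup M] [Module R M]
    (F : Set X → Submodule R M) : Prop :=
  Monotone F ∧ F ∅ = ⊥ ∧ F Set.univ = ⊤

/-- `F` is `D`-lean: `F(S) ⊆ ∑_{x ∈ S} F(x[D])` for every `S ⊆ X`. -/
def IsLean {M : Type*} [AddCommGroup M] [Module R M]
    (F : Set X → Submodule R M) (D : ℝ) : Prop :=
  ∀ S : Set X, F S ≤ ⨆ x ∈ S, F (closedBall x D)

/-- `F` is `δ`-scattered: `F(X) ⊆ ∑_{x ∈ X} F(x[δ])`. -/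
def IsScattered {M : Type*} [AddCommGroup M] [Module R M]
    (F : Set X → Submodule R M) (δ : ℝ) : Prop :=
  F Set.univ ≤ ⨆ x : X, F (closedBall x δ)

/-- `F` is `d`-insular: `F(S) ∩ F(U) ⊆ F(S[d] ∩ U[d])` for all `S, U ⊆ X`. -/
def IsInsular {M : Type*} [AddCommGroup M] [Module R M]
    (F : Set X → Submodule R M) (d : ℝ) : Prop :=
  ∀ S U : Set X, F S ⊓ F U ≤ F (enl S d ∩ enl U d)

/-- `F` is locally finitely generated: `F(T)` is a finitely generated `R`-module
for every bounded `T ⊆ X`. -/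
def IsLocallyFG {M : Type*} [AddCommGroup M] [Module R M]
    (F : Set X → Submodule R M) : Prop :=
  ∀ T : Set X, Bornology.IsBounded T → (F T).FG

/-- `f` is `b`-bicontrolled: `f(F(S)) ⊆ G(S[b])` and `f(F(X)) ∩ G(S) ⊆ f(F(S[b]))`
for all `S ⊆ X`. -/
def IsBicontrolled {M N : Type*} [AddCommGroup M] [Module R M]
    [AddCommGroup N] [Module R N]
    (F : Set X → Submodule R M) (G : Set X → Submodule R N)
    (f : M →ₗ[R] N) (b : ℝ) : Prop :=
  (∀ S : Set X, (F S).map f ≤ G (enl S b)) ∧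
  (∀ S : Set X, (F Set.univ).map f ⊓ G S ≤ (F (enl S b)).map f)

end Defs

/-- in an exact sequence of `X`-filtered modules with bicontrolled maps,
if `E` is lean then `E''` is lean. -/
theorem lean_of_quotient
    {X : Type*} [PseudoMetricSpace X] (R : Type*) [Ring R]
    {M' M M'' : Type*} [AddCommGroup M'] [Module R M'] [AddCommGroup M] [Module R M]
    [AddCommGroup M''] [Module R M'']
    (E' : Set X → Submodule R M') (E : Set X → Submodule R M)
    (E'' : Set X → Submodule R M'') (f : M' →ₗ[R] M) (g : M →ₗ[R] M'')
    (hE' : IsXFiltration R E') (hE : IsXFiltration R E) (hE'' : IsXFiltration R E'')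
    (hinj : Function.Injective f) (hsurj : Function.Surjective g)
    (hexact : LinearMap.range f = LinearMap.ker g)
    (b : ℝ) (hb : 0 ≤ b)
    (hf : IsBicontrolled R E' E f b) (hg : IsBicontrolled R E E'' g b)
    (D : ℝ) (hD : 0 ≤ D) (hlean : IsLean R E D) :
    ∃ D'' : ℝ, 0 ≤ D'' ∧ IsLean R E'' D'' := by
  refine ⟨D + 2 * b, by linarith, ?_⟩
  intro S
  intro z hz
  -- z ∈ E'' S, and g is surjective with E univ = ⊤, so z ∈ g(E(enl S b))
  have htop : (E Set.univ).map g = ⊤ := by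
    rw [hE.2.2, Submodule.map_top, LinearMap.range_eq_top.mpr hsurj]
  have hz2 : z ∈ (E (enl S b)).map g := by
    apply hg.2 S
    exact ⟨by rw [htop]; trivial, hz⟩
  obtain ⟨x, hx, rfl⟩ := hz2
  have hx2 : x ∈ ⨆ y ∈ enl S b, E (closedBall y D) := hlean _ hx
  have key : ((⨆ y ∈ enl S b, E (closedBall y D)).map g : Submodule R M'') ≤
      ⨆ s ∈ S, E'' (closedBall s (D + 2 * b)) := by
    rw [Submodule.map_iSup]
    apply iSup_le
    intro y
    rw [Submodule.map_iSup]
    apply iSup_le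
    intro hy
    obtain ⟨s, hs, hds⟩ := hy
    have h1 : (E (closedBall y D)).map g ≤ E'' (enl (closedBall y D) b) := hg.1 _
    have h2 : enl (closedBall y D) b ⊆ closedBall s (D + 2 * b) := by
      rintro p ⟨q, hq, hpq⟩
      have hqy : dist q y ≤ D := hq
      have : dist p s ≤ dist p q + dist q y + dist y s := dist_triangle4 p q y s
      simp only [mem_closedBall]
      linarith
    calc (E (closedBall y D)).map g ≤ E'' (enl (closedBall y D) b) := h1
      _ ≤ E'' (closedBall s (D + 2 * b)) := hE''.1 h2
      _ ≤ ⨆ s ∈ S, E'' (closedBall s (D + 2 * b)) := le_iSup₂ (f := fun s _ => E'' (closedBall s (D + 2 * b))) s hs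
  exact key ⟨x, hx2, rfl⟩
end

section
/- Let 0 → E' → E → E'' → 0 be an exact sequence of X-filtered R-modules with both maps bicontrolled. If E is insular, then E' (with the filtration E'(S) = f^{-1}(f(E') ∩ E(S)), equivalently the canonical submodule filtration) is insular. -/
open Metric Set

/-- in an exact sequence of `X`-filtered modules with bicontrolled maps,
if `E` is insular then `E'`, carrying the canonical submodule filtration
`E'(S) = f⁻¹(f(E') ∩ E(S))`, is insular. -/
theorem insular_of_sub
    {X : Type*} [PseudoMetricSpace X] (R : Type*) [Ring R]
    {M' M M'' : Type*} [AddCommGroup M'] [Module R M'] [AddCommGroup M] [Module R M]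
    [AddCommGroup M''] [Module R M'']
    (E' : Set X → Submodule R M') (E : Set X → Submodule R M)
    (E'' : Set X → Submodule R M'') (f : M' →ₗ[R] M) (g : M →ₗ[R] M'')
    (hE' : IsXFiltration R E') (hE : IsXFiltration R E) (hE'' : IsXFiltration R E'')
    (hinj : Function.Injective f) (hsurj : Function.Surjective g)
    (hexact : LinearMap.range f = LinearMap.ker g)
    (b : ℝ) (hb : 0 ≤ b)
    (hf : IsBicontrolled R E' E f b) (hg : IsBicontrolled R E E'' g b)
    (hcanon : ∀ S : Set X, E' S = Submodule.comap f (LinearMap.range f ⊓ E S))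
    (d : ℝ) (hd : 0 ≤ d) (hins : IsInsular R E d) :
    ∃ d' : ℝ, 0 ≤ d' ∧ IsInsular R E' d' := by
  refine ⟨d, hd, fun S U x hx => ?_⟩
  simp only [Submodule.mem_inf, hcanon, Submodule.mem_comap] at hx ⊢
  exact ⟨hx.1.1, hins S U ⟨hx.1.2, hx.2.2⟩⟩
end

section
/- Let 0 → E' → E → E'' → 0 be an exact sequence of X-filtered R-modules with both maps bicontrolled. If E is insular and E' is lean, then E'' is insular. -/
open Metric Set

section Aux

variable {X : Type*} [PseudoMetricSpace X]

lemma enl_mono_set {S T : Set X} {r : ℝ} (h : S ⊆ T) : enl S r ⊆ enl T r := by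
  rintro x ⟨s, hs, hd⟩; exact ⟨s, h hs, hd⟩

lemma enl_mono_r {S : Set X} {r r' : ℝ} (h : r ≤ r') : enl S r ⊆ enl S r' := by
  rintro x ⟨s, hs, hd⟩; exact ⟨s, hs, hd.trans h⟩

lemma enl_enl {S : Set X} {a c : ℝ} : enl (enl S a) c ⊆ enl S (a + c) := by
  rintro x ⟨v, ⟨s, hs, hvs⟩, hxv⟩
  exact ⟨s, hs, by have := dist_triangle x v s; linarith⟩

lemma closedBall_subset_enl {S : Set X} {a Dr : ℝ} {v : X} (hv : v ∈ enl S a) :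
    Metric.closedBall v Dr ⊆ enl S (a + Dr) := by
  obtain ⟨s, hs, hvs⟩ := hv
  intro x hx
  simp only [Metric.mem_closedBall] at hx
  exact ⟨s, hs, by have := dist_triangle x v s; linarith⟩

lemma enl_union {A B : Set X} {r : ℝ} : enl (A ∪ B) r ⊆ enl A r ∪ enl B r := by
  rintro x ⟨s, hs | hs, hd⟩
  · exact Or.inl ⟨s, hs, hd⟩
  · exact Or.inr ⟨s, hs, hd⟩

lemma enl_inter {A B : Set X} {r : ℝ} : enl (A ∩ B) r ⊆ enl A r ∩ enl B r := by
  rintro x ⟨s, hs, hd⟩; exact ⟨⟨s, hs.1, hd⟩, ⟨s, hs.2, hd⟩⟩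

end Aux

/-- in an exact sequence of `X`-filtered modules with bicontrolled maps,
if `E` is insular and `E'` is lean then `E''` is insular. -/
theorem insular_of_quotient
    {X : Type*} [PseudoMetricSpace X] (R : Type*) [Ring R]
    {M' M M'' : Type*} [AddCommGroup M'] [Module R M'] [AddCommGroup M] [Module R M]
    [AddCommGroup M''] [Module R M'']
    (E' : Set X → Submodule R M') (E : Set X → Submodule R M)
    (E'' : Set X → Submodule R M'') (f : M' →ₗ[R] M) (g : M →ₗ[R] M'')
    (hE' : IsXFiltration R E') (hE : IsXFiltration R E) (hE'' : IsXFiltration R E'')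
    (hinj : Function.Injective f) (hsurj : Function.Surjective g)
    (hexact : LinearMap.range f = LinearMap.ker g)
    (b : ℝ) (hb : 0 ≤ b)
    (hf : IsBicontrolled R E' E f b) (hg : IsBicontrolled R E E'' g b)
    (d D : ℝ) (hd : 0 ≤ d) (hD : 0 ≤ D)
    (hins : IsInsular R E d) (hlean : IsLean R E' D) :
    ∃ d'' : ℝ, 0 ≤ d'' ∧ IsInsular R E'' d'' := by
  obtain ⟨mE', eE', uE'⟩ := hE'
  obtain ⟨mE, eE, uE⟩ := hE
  obtain ⟨mE'', eE'', uE''⟩ := hE''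
  refine ⟨4*b + D + d, by positivity, ?_⟩
  intro S U z hz
  obtain ⟨hzS, hzU⟩ := hz
  have hztop : z ∈ (E Set.univ).map g := by
    obtain ⟨x0, hx0⟩ := hsurj z
    exact ⟨x0, by simp [uE], hx0⟩
  obtain ⟨x, hx, hgx⟩ := hg.2 S ⟨hztop, hzS⟩
  obtain ⟨y, hy, hgy⟩ := hg.2 U ⟨hztop, hzU⟩
  -- x - y ∈ ker g = range f
  have hker : x - y ∈ LinearMap.range f := by
    rw [hexact, LinearMap.mem_ker, map_sub, hgx, hgy, sub_self]
  obtain ⟨w, hw⟩ := hker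
  set V : Set X := enl S b ∪ enl U b with hV
  have hxyV : x - y ∈ E V :=
    sub_mem (mE (Set.subset_union_left) hx) (mE (Set.subset_union_right) hy)
  have hfw : f w ∈ (E' Set.univ).map f ⊓ E V := by
    refine ⟨⟨w, by simp [uE'], rfl⟩, ?_⟩
    rw [hw]; exact hxyV
  obtain ⟨w', hw', hfw'⟩ := hf.2 V hfw
  have hxy : f w' = x - y := by rw [hfw', hw]
  -- lean decomposition
  have hsup : (⨆ v ∈ enl V b, E' (Metric.closedBall v D)) ≤
      E' (enl S (2*b + D)) ⊔ E' (enl U (2*b + D)) := by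
    refine iSup₂_le fun v hv => ?_
    have hv' : v ∈ enl S (2*b) ∪ enl U (2*b) := by
      have h2 : b + b = 2*b := by ring
      rcases enl_union hv with h | h
      · exact Or.inl (by rw [← h2]; exact enl_enl h)
      · exact Or.inr (by rw [← h2]; exact enl_enl h)
    rcases hv' with h | h
    · exact le_sup_of_le_left (mE' (closedBall_subset_enl h))
    · exact le_sup_of_le_right (mE' (closedBall_subset_enl h))
  have hw'mem : w' ∈ E' (enl S (2*b + D)) ⊔ E' (enl U (2*b + D)) :=
    hsup (hlean (enl V b) hw')
  obtain ⟨wS, hwS, wU, hwU, hwsum⟩ := Submodule.mem_sup.mp hw'mem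
  set r : ℝ := 3*b + D with hr
  -- x - f wS ∈ E (enl S r)
  have hfwS : f wS ∈ E (enl S r) := by
    have h1 : f wS ∈ (E' (enl S (2*b + D))).map f := ⟨wS, hwS, rfl⟩
    have h2 := hf.1 (enl S (2*b + D)) h1
    exact mE (fun x hx => enl_mono_r (by linarith) (enl_enl hx)) h2
  have hfwU : f wU ∈ E (enl U r) := by
    have h1 : f wU ∈ (E' (enl U (2*b + D))).map f := ⟨wU, hwU, rfl⟩
    have h2 := hf.1 (enl U (2*b + D)) h1
    exact mE (fun x hx => enl_mono_r (by linarith) (enl_enl hx)) h2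
  have hxS : x - f wS ∈ E (enl S r) :=
    sub_mem (mE (enl_mono_r (by linarith)) hx) hfwS
  have heq : x - f wS = y + f wU := by
    have h : f wS + f wU = x - y := by rw [← map_add, hwsum, hxy]
    have hx' : x = f wS + f wU + y := sub_eq_iff_eq_add.mp h.symm
    rw [hx']; abel
  have hxU : x - f wS ∈ E (enl U r) := by
    rw [heq]
    exact add_mem (mE (enl_mono_r (by linarith)) hy) hfwU
  set W := enl (enl S r) d ∩ enl (enl U r) d with hW
  have hxW : x - f wS ∈ E W := hins (enl S r) (enl U r) ⟨hxS, hxU⟩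
  -- push to E''
  have hgz : g (x - f wS) = z := by
    have h0 : g (f wS) = 0 := by
      have : f wS ∈ LinearMap.ker g := hexact ▸ ⟨wS, rfl⟩
      exact this
    rw [map_sub, h0, hgx, sub_zero]
  have hz' : z ∈ E'' (enl W b) := by
    have : z ∈ (E W).map g := ⟨x - f wS, hxW, hgz⟩
    exact hg.1 W this
  refine mE'' ?_ hz'
  intro p hp
  constructor
  · have h1 : p ∈ enl (enl (enl S r) d) b :=
      enl_mono_set Set.inter_subset_left hp
    exact enl_mono_r (by rw [hr]; linarith) (enl_enl (enl_enl h1))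
  · have h1 : p ∈ enl (enl (enl U r) d) b :=
      enl_mono_set Set.inter_subset_right hp
    exact enl_mono_r (by rw [hr]; linarith) (enl_enl (enl_enl h1))
end

section
/- Let 0 → E' → E → E'' → 0 be an exact sequence of X-filtered R-modules with both maps bicontrolled. If both E' and E'' are lean, then E is lean. -/
open Metric Set

/-- in an exact sequence of `X`-filtered modules with bicontrolled maps,
if `E'` and `E''` are lean then `E` is lean. -/
theorem lean_of_extension
    {X : Type*} [PseudoMetricSpace X] (R : Type*) [Ring R]
    {M' M M'' : Type*} [AddCommGroup M'] [Module R M'] [AddCommGroup M] [Module R M]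
    [AddCommGroup M''] [Module R M'']
    (E' : Set X → Submodule R M') (E : Set X → Submodule R M)
    (E'' : Set X → Submodule R M'') (f : M' →ₗ[R] M) (g : M →ₗ[R] M'')
    (hE' : IsXFiltration R E') (hE : IsXFiltration R E) (hE'' : IsXFiltration R E'')
    (hinj : Function.Injective f) (hsurj : Function.Surjective g)
    (hexact : LinearMap.range f = LinearMap.ker g)
    (b : ℝ) (hb : 0 ≤ b)
    (hf : IsBicontrolled R E' E f b) (hg : IsBicontrolled R E E'' g b)
    (D' D'' : ℝ) (hD' : 0 ≤ D') (hD'' : 0 ≤ D'')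
    (hlean' : IsLean R E' D') (hlean'' : IsLean R E'' D'') :
    ∃ D : ℝ, 0 ≤ D ∧ IsLean R E D := by
  refine ⟨D' + D'' + 4*b, by linarith, fun S => ?_⟩
  intro u hu
  set D : ℝ := D' + D'' + 4*b with hD
  set P : Submodule R M := ⨆ s ∈ S, E (closedBall s D) with hP
  set Q : Submodule R M := ⨆ x ∈ enl S b, E (closedBall x (D'' + b)) with hQ
  show u ∈ P
  have hQP : Q ≤ P := by
    refine iSup₂_le fun x hx => ?_
    obtain ⟨s, hs, hxs⟩ := hx
    refine le_trans (hE.1 ?_) (le_iSup₂ (f := fun s (_ : s ∈ S) => E (closedBall s D)) s hs)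
    intro z hz
    simp only [mem_closedBall] at hz ⊢
    calc dist z s ≤ dist z x + dist x s := dist_triangle _ _ _
      _ ≤ (D'' + b) + b := add_le_add hz hxs
      _ ≤ D := by simp only [hD]; linarith
  have hEuniv : Submodule.map g (E Set.univ) = ⊤ := by
    rw [hE.2.2, Submodule.map_top, LinearMap.range_eq_top.2 hsurj]
  have hgu : g u ∈ Submodule.map g Q := by
    have h1 : g u ∈ E'' (enl S b) := hg.1 S ⟨u, hu, rfl⟩
    have h2 : E'' (enl S b) ≤ Submodule.map g Q := by
      refine le_trans (hlean'' (enl S b)) (iSup₂_le fun x hx => ?_)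
      have h3 : E'' (closedBall x D'') ≤ Submodule.map g (E (closedBall x (D'' + b))) := by
        have h4 := hg.2 (closedBall x D'')
        rw [hEuniv, top_inf_eq] at h4
        refine le_trans h4 (Submodule.map_mono (hE.1 ?_))
        intro z hz
        obtain ⟨w, hw, hzw⟩ := hz
        simp only [mem_closedBall] at hw hzw ⊢
        calc dist z x ≤ dist z w + dist w x := dist_triangle _ _ _
          _ ≤ b + D'' := add_le_add hzw hw
          _ = D'' + b := by ring
      exact le_trans h3 (Submodule.map_mono
        (le_iSup₂ (f := fun x (_ : x ∈ enl S b) => E (closedBall x (D'' + b))) x hx))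
    exact h2 h1
  obtain ⟨u₀, hu₀Q, hgu₀⟩ := hgu
  have hwker : u - u₀ ∈ LinearMap.range f := by
    rw [hexact, LinearMap.mem_ker, map_sub, hgu₀, sub_self]
  obtain ⟨v, hv⟩ := hwker
  have hwE : u - u₀ ∈ E (enl S (D'' + 2*b)) := by
    have h1 : u ∈ E (enl S (D'' + 2*b)) := by
      have hsub : S ⊆ enl S (D'' + 2*b) := fun s hs =>
        ⟨s, hs, by simp only [dist_self]; linarith⟩
      exact hE.1 hsub hu
    have h2 : u₀ ∈ E (enl S (D'' + 2*b)) := by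
      have hQle : Q ≤ E (enl S (D'' + 2*b)) := by
        refine iSup₂_le fun x hx => hE.1 ?_
        obtain ⟨s, hs, hxs⟩ := hx
        intro z hz
        simp only [mem_closedBall] at hz
        refine ⟨s, hs, ?_⟩
        calc dist z s ≤ dist z x + dist x s := dist_triangle _ _ _
          _ ≤ (D'' + b) + b := add_le_add hz hxs
          _ = D'' + 2*b := by ring
      exact hQle hu₀Q
    exact sub_mem h1 h2
  have hwf : u - u₀ ∈ Submodule.map f (E' (enl S (D'' + 3*b))) := by
    have h1 : u - u₀ ∈ Submodule.map f (E' Set.univ) ⊓ E (enl S (D'' + 2*b)) :=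
      ⟨⟨v, by rw [hE'.2.2]; trivial, hv⟩, hwE⟩
    have h2 := hf.2 (enl S (D'' + 2*b))
    refine Submodule.map_mono (hE'.1 ?_) (h2 h1)
    intro z hz
    obtain ⟨w, ⟨s, hs, hws⟩, hzw⟩ := hz
    refine ⟨s, hs, ?_⟩
    calc dist z s ≤ dist z w + dist w s := dist_triangle _ _ _
      _ ≤ b + (D'' + 2*b) := add_le_add hzw hws
      _ = D'' + 3*b := by ring
  obtain ⟨v', hv', hfv'⟩ := hwf
  have hv'sup : v' ∈ ⨆ y ∈ enl S (D'' + 3*b), E' (closedBall y D') := hlean' _ hv'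
  have hfinal : Submodule.map f (⨆ y ∈ enl S (D'' + 3*b), E' (closedBall y D')) ≤ P := by
    rw [Submodule.map_le_iff_le_comap]
    refine iSup₂_le fun y hy => ?_
    rw [← Submodule.map_le_iff_le_comap]
    obtain ⟨s, hs, hys⟩ := hy
    have h1 : Submodule.map f (E' (closedBall y D')) ≤ E (enl (closedBall y D') b) := hf.1 _
    refine le_trans h1 (le_trans (hE.1 ?_)
      (le_iSup₂ (f := fun s (_ : s ∈ S) => E (closedBall s D)) s hs))
    intro z hz
    obtain ⟨w, hw, hzw⟩ := hz
    simp only [mem_closedBall] at hw ⊢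
    calc dist z s ≤ dist z w + (dist w y + dist y s) :=
          le_trans (dist_triangle _ _ _) (by gcongr; exact dist_triangle _ _ _)
      _ ≤ b + (D' + (D'' + 3*b)) := by gcongr
      _ = D := by simp only [hD]; ring
  have hwP : u - u₀ ∈ P := by
    rw [← hfv']
    exact hfinal ⟨v', hv'sup, rfl⟩
  have := add_mem hwP (hQP hu₀Q)
  simpa using this
end
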